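/- Let F(β) = (1/n)Σᵢ |yᵢ − xᵢᵀβ| + λ₁‖β‖₁ + (λ₂/2)‖β‖₂². Then F is λ₂-strongly convex on ℝᵖ, and consequently if β̂_D and β̂_{D′} are minimizers of F over datasets D and D′ differing in one of the n points, and ‖xᵢ‖₂ ≤ c_x for all points, then ‖β̂_D − β̂_{D′}‖₂ ≤ 2 c_x/(n λ₂). -/

import Mathlib

open scoped RealInnerProductSpace

/-- The elastic-net penalized LAD objective. -/
noncomputable def objF {p n : ℕ} (lam1 lam2 : ℝ)
    (D : Fin n → ℝ × EuclideanSpace ℝ (Fin p)) (β : EuclideanSpace ℝ (Fin p)) : ℝ :=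
  (1 / n) * ∑ i, |(D i).1 - ⟪(D i).2, β⟫| + lam1 * ∑ j, |β j| + (lam2 / 2) * ‖β‖^2

section aux

variable {E : Type*} [NormedAddCommGroup E] [InnerProductSpace ℝ E]

lemma convexOn_finset_sum {ι : Type*} (t : Finset ι) (f : ι → E → ℝ)
    (h : ∀ i ∈ t, ConvexOn ℝ Set.univ (f i)) :
    ConvexOn ℝ Set.univ (fun x => ∑ i ∈ t, f i x) := by
  classical
  induction t using Finset.induction with
  | empty => simpa using convexOn_const (0 : ℝ) convex_univ
  | @insert _ _ hx ih =>
    simp_rw [Finset.sum_insert hx]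
    exact (h _ (Finset.mem_insert_self _ _)).add
      (ih fun i hi => h i (Finset.mem_insert_of_mem hi))

lemma convexOn_abs_affine (c : ℝ) (x : E) :
    ConvexOn ℝ Set.univ (fun β => |c - ⟪x, β⟫|) := by
  refine ⟨convex_univ, fun u _ v _ a b ha hb hab => ?_⟩
  have h1 : c - ⟪x, a • u + b • v⟫ = a * (c - ⟪x, u⟫) + b * (c - ⟪x, v⟫) := by
    rw [inner_add_right, real_inner_smul_right, real_inner_smul_right]
    have hb' : b = 1 - a := by linarith
    subst hb'; ring
  simp only [smul_eq_mul]
  calc |c - ⟪x, a • u + b • v⟫| = |a * (c - ⟪x, u⟫) + b * (c - ⟪x, v⟫)| := by rw [h1]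
    _ ≤ |a * (c - ⟪x, u⟫)| + |b * (c - ⟪x, v⟫)| := abs_add_le _ _
    _ = a * |c - ⟪x, u⟫| + b * |c - ⟪x, v⟫| := by
        rw [abs_mul, abs_mul, abs_of_nonneg ha, abs_of_nonneg hb]

lemma convexOn_abs_coord {p : ℕ} (j : Fin p) :
    ConvexOn ℝ Set.univ (fun β : EuclideanSpace ℝ (Fin p) => |β j|) := by
  refine ⟨convex_univ, fun u _ v _ a b ha hb hab => ?_⟩
  have h1 : (a • u + b • v : EuclideanSpace ℝ (Fin p)) j = a * u j + b * v j := rfl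
  simp only [smul_eq_mul, h1]
  calc |a * u j + b * v j| ≤ |a * u j| + |b * v j| := abs_add_le _ _
    _ = a * |u j| + b * |v j| := by
        rw [abs_mul, abs_mul, abs_of_nonneg ha, abs_of_nonneg hb]

lemma convexOn_const_mul (c : ℝ) (hc : 0 ≤ c) {f : E → ℝ}
    (hf : ConvexOn ℝ Set.univ f) : ConvexOn ℝ Set.univ (fun x => c * f x) := by
  simpa [Pi.smul_def, smul_eq_mul] using hf.smul hc

/-- Growth from a minimizer of a strongly convex function. -/
lemma min_growth {m : ℝ} (hm : 0 ≤ m) {f : E → ℝ}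
    (hf : StrongConvexOn Set.univ m f) {x : E} (hx : IsMinOn f Set.univ x) (y : E) :
    f x + m / 2 * ‖x - y‖ ^ 2 ≤ f y := by
  set M : ℝ := m / 2 * ‖x - y‖ ^ 2 with hM
  have hM0 : 0 ≤ M := by positivity
  have key : ∀ t : ℝ, 0 < t → t ≤ 1 → f x + M ≤ f y + t * M := by
    intro t ht ht1
    obtain ⟨-, hineq⟩ := hf
    have h := hineq (Set.mem_univ x) (Set.mem_univ y)
      (show (0:ℝ) ≤ 1 - t by linarith) ht.le (show (1 - t) + t = 1 by ring)
    have hmin : f x ≤ f ((1 - t) • x + t • y) := hx (Set.mem_univ _)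
    simp only [smul_eq_mul] at h
    have h2 : f x ≤ (1 - t) * f x + t * f y - (1 - t) * t * M := le_trans hmin h
    have h3 : t * (f x + M) ≤ t * (f y + t * M) := by nlinarith
    exact le_of_mul_le_mul_left h3 ht
  rcases eq_or_lt_of_le hM0 with hM0' | hM0'
  · have := key 1 one_pos le_rfl
    simpa [← hM0'] using this
  · refine le_of_forall_pos_le_add fun ε hε => ?_
    have htpos : 0 < min 1 (ε / M) := lt_min one_pos (div_pos hε hM0')
    have h5 := key _ htpos (min_le_left _ _)
    have h4 : min 1 (ε / M) * M ≤ ε := by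
      rw [← le_div_iff₀ hM0']
      exact min_le_right _ _
    linarith

end aux

theorem elastic_net_LAD_strong_convexity_and_sensitivity {p n : ℕ} (hn : 1 ≤ n)
    (lam1 lam2 : ℝ) (hlam1 : 0 ≤ lam1) (hlam2 : 0 < lam2) (cx : ℝ) :
    (∀ D : Fin n → ℝ × EuclideanSpace ℝ (Fin p),
      StrongConvexOn Set.univ lam2 (objF lam1 lam2 D)) ∧
    (∀ (D D' : Fin n → ℝ × EuclideanSpace ℝ (Fin p)),
      (∀ i, ‖(D i).2‖ ≤ cx) → (∀ i, ‖(D' i).2‖ ≤ cx) →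
      (∃ i₀, ∀ i, i ≠ i₀ → D i = D' i) →
      ∀ (βD βD' : EuclideanSpace ℝ (Fin p)),
        IsMinOn (objF lam1 lam2 D) Set.univ βD →
        IsMinOn (objF lam1 lam2 D') Set.univ βD' →
        ‖βD - βD'‖ ≤ 2 * cx / (n * lam2)) := by
  have hsc : ∀ D : Fin n → ℝ × EuclideanSpace ℝ (Fin p),
      StrongConvexOn Set.univ lam2 (objF lam1 lam2 D) := by
    intro D
    rw [strongConvexOn_iff_convex]
    have heq : (fun β : EuclideanSpace ℝ (Fin p) =>
        objF lam1 lam2 D β - lam2 / 2 * ‖β‖ ^ 2)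
        = fun β => (1 / (n : ℝ)) * ∑ i, |(D i).1 - ⟪(D i).2, β⟫|
            + lam1 * ∑ j, |β j| := by
      funext β; simp only [objF]; ring
    rw [heq]
    exact (convexOn_const_mul _ (by positivity)
        (convexOn_finset_sum _ _ fun i _ => convexOn_abs_affine _ _)).add
      (convexOn_const_mul _ hlam1
        (convexOn_finset_sum _ _ fun j _ => convexOn_abs_coord j))
  refine ⟨hsc, ?_⟩
  rintro D D' hD hD' ⟨i₀, hsame⟩ βD βD' hminD hminD'
  have hnpos : (0 : ℝ) < n := by exact_mod_cast hn
  have hcx : 0 ≤ cx := le_trans (norm_nonneg _) (hD i₀)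
  have h1 := min_growth hlam2.le (hsc D) hminD βD'
  have h2 := min_growth hlam2.le (hsc D') hminD' βD
  rw [norm_sub_rev] at h2
  have hdiff : ∀ β : EuclideanSpace ℝ (Fin p),
      objF lam1 lam2 D β - objF lam1 lam2 D' β
        = (1 / (n : ℝ)) * (|(D i₀).1 - ⟪(D i₀).2, β⟫| - |(D' i₀).1 - ⟪(D' i₀).2, β⟫|) := by
    intro β
    have hsum : ∀ (E : Fin n → ℝ × EuclideanSpace ℝ (Fin p)),
        ∑ i, |(E i).1 - ⟪(E i).2, β⟫|
          = |(E i₀).1 - ⟪(E i₀).2, β⟫| + ∑ i ∈ Finset.univ.erase i₀,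
              |(E i).1 - ⟪(E i).2, β⟫| :=
      fun E => (Finset.add_sum_erase _ _ (Finset.mem_univ i₀)).symm
    have herase : ∑ i ∈ Finset.univ.erase i₀, |(D i).1 - ⟪(D i).2, β⟫|
        = ∑ i ∈ Finset.univ.erase i₀, |(D' i).1 - ⟪(D' i).2, β⟫| := by
      refine Finset.sum_congr rfl fun i hi => ?_
      rw [hsame i (Finset.ne_of_mem_erase hi)]
    simp only [objF, hsum D, hsum D', herase]
    ring
  have hlip : ∀ (c : ℝ) (x : EuclideanSpace ℝ (Fin p)), ‖x‖ ≤ cx →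
      ∀ u v : EuclideanSpace ℝ (Fin p),
      |c - ⟪x, u⟫| - |c - ⟪x, v⟫| ≤ cx * ‖u - v‖ := by
    intro c x hx u v
    have ha1 : |c - ⟪x, u⟫| - |c - ⟪x, v⟫| ≤ |(c - ⟪x, u⟫) - (c - ⟪x, v⟫)| :=
      abs_sub_abs_le_abs_sub _ _
    have ha2 : (c - ⟪x, u⟫) - (c - ⟪x, v⟫) = ⟪x, v - u⟫ := by
      rw [inner_sub_right]; ring
    have ha3 : |⟪x, v - u⟫| ≤ ‖x‖ * ‖v - u‖ := abs_real_inner_le_norm _ _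
    have ha4 : ‖x‖ * ‖v - u‖ ≤ cx * ‖u - v‖ := by
      rw [norm_sub_rev]
      exact mul_le_mul_of_nonneg_right hx (norm_nonneg _)
    calc |c - ⟪x, u⟫| - |c - ⟪x, v⟫| ≤ |⟪x, v - u⟫| := by rw [← ha2]; exact ha1
      _ ≤ cx * ‖u - v‖ := le_trans ha3 ha4
  have hA := hlip (D i₀).1 (D i₀).2 (hD i₀) βD' βD
  have hB := hlip (D' i₀).1 (D' i₀).2 (hD' i₀) βD βD'
  rw [norm_sub_rev βD'] at hA
  have hd1 := hdiff βD'
  have hd2 := hdiff βD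
  have hkey : lam2 * ‖βD - βD'‖ ^ 2 ≤ (1 / (n : ℝ)) * (2 * cx * ‖βD - βD'‖) := by
    have hn' : (0:ℝ) < 1 / (n : ℝ) := by positivity
    nlinarith [hn'.le]
  rcases eq_or_lt_of_le (norm_nonneg (βD - βD')) with hz | hz
  · rw [← hz]; positivity
  · rw [le_div_iff₀ (by positivity)]
    have hmul : (n : ℝ) * (lam2 * ‖βD - βD'‖ ^ 2) ≤ 2 * cx * ‖βD - βD'‖ := by
      calc (n : ℝ) * (lam2 * ‖βD - βD'‖ ^ 2)
          ≤ (n : ℝ) * ((1 / (n : ℝ)) * (2 * cx * ‖βD - βD'‖)) :=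
            mul_le_mul_of_nonneg_left hkey hnpos.le
        _ = 2 * cx * ‖βD - βD'‖ := by field_simp
    nlinarith
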